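/- Let N be an even positive integer and l an odd integer with 0 < l < N, and let A^{N,l} = (A_yes^{N,l}, A_no^{N,l}) be the promise problem over the unary alphabet {a} with A_yes^{N,l} = {a^{iN} : i ≥ 0} and A_no^{N,l} = {a^{iN+l} : i ≥ 0}. Then s(A_yes^{N,l}) = N and s(A_no^{N,l}) = N, but ss(A^{N,l}) = 2; in particular ss(A) can be much smaller than both s(A_yes) and s(A_no). -/

import Mathlib

/-- The extended transition function `δ̂`: run a finite automaton's transition
function on a whole word. -/
def evalWord {α : Type} {n : ℕ} (δ : Fin n → α → Fin n) (s : Fin n) (w : List α) : Fin n :=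
  w.foldl δ s

/-- A promise version deterministic finite automaton (pvDFA) over the
alphabet `α`, with (finite) state set `Fin n`, transition function `step`,
initial state `start`, and disjoint sets of accepting and rejecting states. -/
structure PVDFA (α : Type) (n : ℕ) where
  step : Fin n → α → Fin n
  start : Fin n
  accept : Finset (Fin n)
  reject : Finset (Fin n)
  disj : Disjoint accept reject

namespace PVDFA

/-- The state reached by the pvDFA after reading the word `w`. -/
def eval {α : Type} {n : ℕ} (M : PVDFA α n) (w : List α) : Fin n :=
  evalWord M.step M.start w

/-- A pvDFA recognizes the promise problem `(Ayes, Ano)`: for every word `w`,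
`w ∈ Ayes` iff the reached state is accepting, and `w ∈ Ano` iff it is rejecting. -/
def Recognizes {α : Type} {n : ℕ} (M : PVDFA α n) (Ayes Ano : Set (List α)) : Prop :=
  (∀ w, w ∈ Ayes ↔ M.eval w ∈ M.accept) ∧ (∀ w, w ∈ Ano ↔ M.eval w ∈ M.reject)

/-- A pvDFA solves the promise problem `(Ayes, Ano)`: every `w ∈ Ayes` leads to an
accepting state and every `w ∈ Ano` leads to a rejecting state. -/
def Solves {α : Type} {n : ℕ} (M : PVDFA α n) (Ayes Ano : Set (List α)) : Prop :=
  (∀ w ∈ Ayes, M.eval w ∈ M.accept) ∧ (∀ w ∈ Ano, M.eval w ∈ M.reject)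

end PVDFA

/-- `s(L)`: the minimal number of states of a DFA recognizing the language `L`. -/
noncomputable def dfaSize {α : Type} (L : Set (List α)) : ℕ :=
  sInf {n : ℕ | ∃ (δ : Fin n → α → Fin n) (s₀ : Fin n) (F : Finset (Fin n)),
    ∀ w, w ∈ L ↔ evalWord δ s₀ w ∈ F}

/-- `sr(A)`: the minimal number of states of a pvDFA recognizing the promise
problem `(Ayes, Ano)`. -/
noncomputable def srSize {α : Type} (Ayes Ano : Set (List α)) : ℕ :=
  sInf {n : ℕ | ∃ M : PVDFA α n, M.Recognizes Ayes Ano}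

/-- `ss(A)`: the minimal number of states of a pvDFA solving the promise
problem `(Ayes, Ano)`. -/
noncomputable def ssSize {α : Type} (Ayes Ano : Set (List α)) : ℕ :=
  sInf {n : ℕ | ∃ M : PVDFA α n, M.Solves Ayes Ano}

/-! ### Auxiliary lemmas -/

open Fin.NatCast Fin.CommRing

lemma evalWord_replicate_add {n : ℕ} (δ : Fin n → Unit → Fin n) (s : Fin n) (a b : ℕ) :
    evalWord δ s (List.replicate (a + b) ()) =
      evalWord δ (evalWord δ s (List.replicate a ())) (List.replicate b ()) := by
  show List.foldl _ _ _ = _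
  rw [List.replicate_add, List.foldl_append]; rfl

lemma evalWord_cyc {n : ℕ} [NeZero n] (s : Fin n) (k : ℕ) :
    evalWord (fun t _ => t + 1) s (List.replicate k ()) = s + (k : Fin n) := by
  induction k generalizing s with
  | zero => simp [evalWord]
  | succ k ih =>
    rw [List.replicate_succ]
    show evalWord _ (s + 1) (List.replicate k ()) = _
    rw [ih]
    push_cast
    ring

lemma mem_arith {N r : ℕ} (hr : r < N) (w : List Unit) :
    (∃ i : ℕ, w = List.replicate (i * N + r) ()) ↔ w.length % N = r := by
  constructor
  · rintro ⟨i, rfl⟩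
    simp [List.length_replicate, Nat.mul_add_mod', Nat.mod_eq_of_lt hr]
  · intro h
    refine ⟨w.length / N, ?_⟩
    have hw : w = List.replicate w.length () := by
      apply List.eq_replicate_of_mem; intro b _; rfl
    conv_lhs => rw [hw]
    congr 1
    have := Nat.div_add_mod w.length N
    have h2 : w.length / N * N = N * (w.length / N) := Nat.mul_comm _ _
    omega

lemma dfa_arith (N r : ℕ) (hN : 0 < N) (hr : r < N) :
    dfaSize {w : List Unit | ∃ i : ℕ, w = List.replicate (i * N + r) ()} = N := by
  haveI : NeZero N := ⟨hN.ne'⟩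
  have hmem : N ∈ {n : ℕ | ∃ (δ : Fin n → Unit → Fin n) (s₀ : Fin n) (F : Finset (Fin n)),
      ∀ w, w ∈ {w : List Unit | ∃ i : ℕ, w = List.replicate (i * N + r) ()}
        ↔ evalWord δ s₀ w ∈ F} := by
    refine ⟨fun t _ => t + 1, 0, {(r : Fin N)}, fun w => ?_⟩
    have hw : w = List.replicate w.length () := by
      apply List.eq_replicate_of_mem; intro b _; rfl
    rw [Set.mem_setOf_eq, mem_arith hr]
    conv_rhs => rw [hw]
    rw [evalWord_cyc, zero_add, Finset.mem_singleton]
    rw [Fin.ext_iff, Fin.val_natCast, Fin.val_natCast, Nat.mod_eq_of_lt hr]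
  refine le_antisymm (Nat.sInf_le hmem) (le_csInf ⟨N, hmem⟩ ?_)
  rintro m ⟨δ, s₀, F, hF⟩
  by_contra hcon
  push_neg at hcon
  -- pigeonhole: two of the first N states coincide
  obtain ⟨a, b, hab, hq⟩ := Fintype.exists_ne_map_eq_of_card_lt
    (fun k : Fin N => evalWord δ s₀ (List.replicate k.val ())) (by simpa using hcon)
  -- wlog a.val < b.val
  wlog hlt : a.val < b.val generalizing a b
  · have hne : (a : ℕ) ≠ (b : ℕ) := fun h => hab (Fin.ext h)
    exact this b a hab.symm hq.symm (by omega)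
  set j := a.val
  set k := b.val
  have hkN : k < N := b.isLt
  have hd : 0 < k - j := by omega
  have hdN : k - j < N := by omega
  have key : ∀ t : ℕ, evalWord δ s₀ (List.replicate (j + t) ())
      = evalWord δ s₀ (List.replicate (k + t) ()) := by
    intro t
    rw [evalWord_replicate_add, evalWord_replicate_add, hq]
  set t := N + r - j % N with ht
  have hjmod := Nat.div_add_mod j N
  have hjlt : j % N < N := Nat.mod_lt _ hN
  have hjt : (j + t) % N = r := by
    have e : j + t = (j / N + 1) * N + r := by
      have h3 : (j / N + 1) * N = N * (j / N) + N := by ring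
      omega
    rw [e, Nat.mul_add_mod', Nat.mod_eq_of_lt hr]
  have hkt : (k + t) % N ≠ r := by
    have e : k + t = (j + t) + (k - j) := by omega
    rw [e, Nat.add_mod, hjt, Nat.mod_eq_of_lt hdN]
    rcases lt_or_ge (r + (k - j)) N with hc | hc
    · rw [Nat.mod_eq_of_lt hc]; omega
    · rw [Nat.mod_eq_sub_mod hc, Nat.mod_eq_of_lt (by omega)]; omega
  have h1 : List.replicate (j + t) () ∈
      {w : List Unit | ∃ i : ℕ, w = List.replicate (i * N + r) ()} := by
    rw [Set.mem_setOf_eq, mem_arith hr]; simpa using hjt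
  have h2 : List.replicate (k + t) () ∉
      {w : List Unit | ∃ i : ℕ, w = List.replicate (i * N + r) ()} := by
    rw [Set.mem_setOf_eq, mem_arith hr]; simpa using hkt
  rw [hF] at h1 h2
  rw [key t] at h1
  exact h2 h1

/-- for an even positive integer `N` and an odd `l` with
`0 < l < N`, the promise problem `A^{N,l} = ({a^{iN}}, {a^{iN+l}})` over the
unary alphabet satisfies `s(A_yes) = N`, `s(A_no) = N`, but `ss(A^{N,l}) = 2`. -/
theorem ss_can_be_small (N l : ℕ) (hNpos : 0 < N) (hNeven : Even N)
    (hlodd : Odd l) (hl : 0 < l) (hlN : l < N) :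
    dfaSize {w : List Unit | ∃ i : ℕ, w = List.replicate (i * N) ()} = N ∧
    dfaSize {w : List Unit | ∃ i : ℕ, w = List.replicate (i * N + l) ()} = N ∧
    ssSize {w : List Unit | ∃ i : ℕ, w = List.replicate (i * N) ()}
           {w : List Unit | ∃ i : ℕ, w = List.replicate (i * N + l) ()} = 2 := by
  refine ⟨?_, dfa_arith N l hNpos hlN, ?_⟩
  · have h := dfa_arith N 0 hNpos hNpos
    simpa using h
  · -- the two-state parity automaton solves the promise problem
    have hmem : 2 ∈ {n : ℕ | ∃ M : PVDFA Unit n,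
        M.Solves {w : List Unit | ∃ i : ℕ, w = List.replicate (i * N) ()}
                 {w : List Unit | ∃ i : ℕ, w = List.replicate (i * N + l) ()}} := by
      refine ⟨⟨fun s _ => s + 1, 0, {0}, {1}, by decide⟩, ?_, ?_⟩
      · rintro w ⟨i, rfl⟩
        show evalWord (fun t _ => t + 1) (0 : Fin 2) _ ∈ ({0} : Finset (Fin 2))
        rw [evalWord_cyc, zero_add, Finset.mem_singleton]
        have he : Even (i * N) := hNeven.mul_left i
        rw [Fin.ext_iff, Fin.val_natCast]
        simpa using Nat.even_iff.mp he
      · rintro w ⟨i, rfl⟩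
        show evalWord (fun t _ => t + 1) (0 : Fin 2) _ ∈ ({1} : Finset (Fin 2))
        rw [evalWord_cyc, zero_add, Finset.mem_singleton]
        have ho : Odd (i * N + l) := (hNeven.mul_left i).add_odd hlodd
        rw [Fin.ext_iff, Fin.val_natCast]
        simpa using Nat.odd_iff.mp ho
    refine le_antisymm (Nat.sInf_le hmem) (le_csInf ⟨2, hmem⟩ ?_)
    rintro m ⟨M, hs1, hs2⟩
    match m, M with
    | 0, M => exact M.start.elim0
    | 1, M =>
      exfalso
      have h1 : M.eval [] ∈ M.accept := hs1 [] ⟨0, by simp⟩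
      have h2 : M.eval (List.replicate l ()) ∈ M.reject := hs2 _ ⟨0, by simp⟩
      have he : M.eval [] = M.eval (List.replicate l ()) := Subsingleton.elim _ _
      exact Finset.disjoint_left.mp M.disj h1 (he ▸ h2)
    | (n + 2), M => omega
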